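/- Let d ∈ (−1,1), ω ∈ ℝ, γ > 0 and β ∈ ℂ. If ϱ ∈ M₂(ℂ) satisfies tr ϱ = 1 and L⋆ᵃ(ϱ) = 0, then ϱ = ϱᵃ_∞, where ϱᵃ_∞ is the 2×2 matrix with entries (ϱᵃ_∞)₁₁ = 1/2 + d(γ² + ω²)/(2(γ² + ω² + 2|β|²)), (ϱᵃ_∞)₁₂ = dβ(γ − iω)/(γ² + ω² + 2|β|²), (ϱᵃ_∞)₂₁ = d·conj(β)(γ + iω)/(γ² + ω² + 2|β|²), (ϱᵃ_∞)₂₂ = 1/2 − d(γ² + ω²)/(2(γ² + ω² + 2|β|²)). That is, ϱᵃ_∞ is the unique trace-one fixed point of L⋆ᵃ. -/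

import Mathlib

open Matrix ComplexOrder

/-- `σ⁺ = [[0,1],[0,0]]`. -/
noncomputable def sigmaPlus : Matrix (Fin 2) (Fin 2) ℂ := !![0, 1; 0, 0]

/-- `σ⁻ = [[0,0],[1,0]]`. -/
noncomputable def sigmaMinus : Matrix (Fin 2) (Fin 2) ℂ := !![0, 0; 1, 0]

/-- `σ³ = [[1,0],[0,−1]]`. -/
noncomputable def sigma3 : Matrix (Fin 2) (Fin 2) ℂ := !![1, 0; 0, -1]

/-- The atomic GKSL generator `L⋆ᵃ` on `M₂(ℂ)` with parameters `d, ω, γ, β`. -/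
noncomputable def Lstara (d ω γ : ℝ) (β : ℂ) (ϱ : Matrix (Fin 2) (Fin 2) ℂ) :
    Matrix (Fin 2) (Fin 2) ℂ :=
  (-(Complex.I * (ω : ℂ) / 2)) • (sigma3 * ϱ - ϱ * sigma3)
  + ((γ * (1 - d) : ℝ) : ℂ) •
      (sigmaMinus * ϱ * sigmaPlus - (1 / 2 : ℂ) • (sigmaPlus * sigmaMinus * ϱ)
        - (1 / 2 : ℂ) • (ϱ * (sigmaPlus * sigmaMinus)))
  + ((γ * (1 + d) : ℝ) : ℂ) •
      (sigmaPlus * ϱ * sigmaMinus - (1 / 2 : ℂ) • (sigmaMinus * sigmaPlus * ϱ)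
        - (1 / 2 : ℂ) • (ϱ * (sigmaMinus * sigmaPlus)))
  + (((starRingEnd ℂ) β • sigmaMinus - β • sigmaPlus) * ϱ
      - ϱ * ((starRingEnd ℂ) β • sigmaMinus - β • sigmaPlus))

/-- The equilibrium state `ϱᵃ_∞` of the atomic GKSL generator. -/
noncomputable def rhoAInf (d ω γ : ℝ) (β : ℂ) : Matrix (Fin 2) (Fin 2) ℂ :=
  !![((1 / 2 + d * (γ ^ 2 + ω ^ 2) /
        (2 * (γ ^ 2 + ω ^ 2 + 2 * ‖β‖ ^ 2)) : ℝ) : ℂ),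
     (d : ℂ) * β * ((γ : ℂ) - (ω : ℂ) * Complex.I) /
        (((γ ^ 2 + ω ^ 2 + 2 * ‖β‖ ^ 2 : ℝ)) : ℂ);
     (d : ℂ) * (starRingEnd ℂ) β * ((γ : ℂ) + (ω : ℂ) * Complex.I) /
        (((γ ^ 2 + ω ^ 2 + 2 * ‖β‖ ^ 2 : ℝ)) : ℂ),
     ((1 / 2 - d * (γ ^ 2 + ω ^ 2) /
        (2 * (γ ^ 2 + ω ^ 2 + 2 * ‖β‖ ^ 2)) : ℝ) : ℂ)]

/-- **`ϱᵃ_∞` is the unique trace-one fixed point of the atomic GKSL generator `L⋆ᵃ`.** -/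
theorem atomic_gksl_unique_fixed_point
    (d ω γ : ℝ) (β : ℂ) (hd : -1 < d ∧ d < 1) (hγ : 0 < γ)
    (ϱ : Matrix (Fin 2) (Fin 2) ℂ)
    (htr : ϱ.trace = 1) (hfix : Lstara d ω γ β ϱ = 0) :
    ϱ = rhoAInf d ω γ β := by
  have h00 := congrFun (congrFun hfix 0) 0
  have h01 := congrFun (congrFun hfix 0) 1
  have h10 := congrFun (congrFun hfix 1) 0
  simp [Lstara, sigmaPlus, sigmaMinus, sigma3, Matrix.mul_apply, Matrix.vecMul,
    dotProduct, Fin.sum_univ_two] at h00 h01 h10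
  simp only [Matrix.trace_fin_two] at htr
  set u : ℂ := β with hu
  set v : ℂ := (starRingEnd ℂ) β with hv
  have habs : ((‖β‖ : ℝ) : ℂ) ^ 2 = u * v := by
    rw [← Complex.ofReal_pow, Complex.sq_norm, hu, hv, Complex.normSq_eq_conj_mul_self]
    exact mul_comm _ _
  set K : ℂ := (γ : ℂ) ^ 2 + (ω : ℂ) ^ 2 with hK
  set D : ℂ := K + 2 * (u * v) with hD
  have hγc : (γ : ℂ) ≠ 0 := by
    exact_mod_cast ne_of_gt hγ
  have hDR : (0 : ℝ) < γ ^ 2 + ω ^ 2 + 2 * ‖β‖ ^ 2 := by positivity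
  have hDRne : ((γ ^ 2 + ω ^ 2 + 2 * ‖β‖ ^ 2 : ℝ) : ℂ) ≠ 0 := by
    exact_mod_cast ne_of_gt hDR
  have hDcast : ((γ ^ 2 + ω ^ 2 + 2 * ‖β‖ ^ 2 : ℝ) : ℂ) = D := by
    push_cast
    rw [hD, hK, ← habs]
  have hDne : D ≠ 0 := hDcast ▸ hDRne
  have hp : ((γ : ℂ) + (ω : ℂ) * Complex.I) ≠ 0 := by
    intro h
    have := congrArg Complex.re h
    simp at this
    exact absurd this (ne_of_gt hγ)
  have hm : ((γ : ℂ) - (ω : ℂ) * Complex.I) ≠ 0 := by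
    intro h
    have := congrArg Complex.re h
    simp at this
    exact absurd this (ne_of_gt hγ)
  -- key relation: (a - e) * D = d * K
  have hsγ : (γ : ℂ) * ((ϱ 0 0 - ϱ 1 1) * D - (d : ℂ) * K) = 0 := by
    rw [hD, hK]
    linear_combination (-((γ:ℂ)^2 + (ω:ℂ)^2)) * h00 + v * ((γ:ℂ) - (ω:ℂ) * Complex.I) * h01
      + u * ((γ:ℂ) + (ω:ℂ) * Complex.I) * h10 + (γ:ℂ) * (d:ℂ) * ((γ:ℂ)^2 + (ω:ℂ)^2) * htr
      + (-((ω:ℂ)^2 * u * ϱ 1 0 + (ω:ℂ)^2 * v * ϱ 0 1)) * Complex.I_sq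
  have hs : (ϱ 0 0 - ϱ 1 1) * D = (d : ℂ) * K := by
    exact sub_eq_zero.mp ((mul_eq_zero.mp hsγ).resolve_left hγc)
  have hb2 : ((γ:ℂ) + (ω:ℂ) * Complex.I) * (ϱ 0 1 * D)
      = ((γ:ℂ) + (ω:ℂ) * Complex.I) * ((d:ℂ) * u * ((γ:ℂ) - (ω:ℂ) * Complex.I)) := by
    linear_combination (-D) * h01 + u * hs + (u * (d:ℂ)) * hK
      + ((d:ℂ) * u * (ω:ℂ)^2) * Complex.I_sq
  have hb : ϱ 0 1 * D = (d:ℂ) * u * ((γ:ℂ) - (ω:ℂ) * Complex.I) := mul_left_cancel₀ hp hb2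
  have hc2 : ((γ:ℂ) - (ω:ℂ) * Complex.I) * (ϱ 1 0 * D)
      = ((γ:ℂ) - (ω:ℂ) * Complex.I) * ((d:ℂ) * v * ((γ:ℂ) + (ω:ℂ) * Complex.I)) := by
    linear_combination (-D) * h10 + v * hs + (v * (d:ℂ)) * hK
      + ((d:ℂ) * v * (ω:ℂ)^2) * Complex.I_sq
  have hc : ϱ 1 0 * D = (d:ℂ) * v * ((γ:ℂ) + (ω:ℂ) * Complex.I) := mul_left_cancel₀ hm hc2
  have hne2 : (γ:ℂ)^2 + (ω:ℂ)^2 + 2 * (u * v) ≠ 0 := by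
    rw [show (γ:ℂ)^2 + (ω:ℂ)^2 + 2 * (u * v) = D by rw [hD, hK]]
    exact hDne
  have hs' : (ϱ 0 0 - ϱ 1 1) * ((γ:ℂ)^2 + (ω:ℂ)^2 + 2 * (u * v)) = (d:ℂ) * ((γ:ℂ)^2 + (ω:ℂ)^2) := by
    rw [show (γ:ℂ)^2 + (ω:ℂ)^2 + 2 * (u * v) = D by rw [hD, hK], hs, hK]
  have hb' : ϱ 0 1 * ((γ:ℂ)^2 + (ω:ℂ)^2 + 2 * (u * v)) = (d:ℂ) * u * ((γ:ℂ) - (ω:ℂ) * Complex.I) := by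
    rw [show (γ:ℂ)^2 + (ω:ℂ)^2 + 2 * (u * v) = D by rw [hD, hK], hb]
  have hc' : ϱ 1 0 * ((γ:ℂ)^2 + (ω:ℂ)^2 + 2 * (u * v)) = (d:ℂ) * v * ((γ:ℂ) + (ω:ℂ) * Complex.I) := by
    rw [show (γ:ℂ)^2 + (ω:ℂ)^2 + 2 * (u * v) = D by rw [hD, hK], hc]
  clear hs hb hc hb2 hc2 hsγ hDcast hDne hfix
  ext i j
  fin_cases i <;> fin_cases j <;> simp [rhoAInf] <;> push_cast <;> rw [habs] <;>
    field_simp [hne2]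
  · have h2 : ((γ:ℂ)^2 + (ω:ℂ)^2 + 2 * u * v) ≠ 0 := by convert hne2 using 1; ring
    rw [← sub_eq_iff_eq_add', eq_div_iff h2]
    linear_combination hs' + ((γ:ℂ)^2 + (ω:ℂ)^2 + 2 * (u * v)) * htr
  · have h2 : ((γ:ℂ)^2 + (ω:ℂ)^2 + u * 2 * v) ≠ 0 := by convert hne2 using 1; ring
    rw [eq_div_iff h2]
    linear_combination hb'
  · have h2 : ((γ:ℂ)^2 + (ω:ℂ)^2 + 2 * u * v) ≠ 0 := by convert hne2 using 1; ring
    show ϱ 1 0 = (d:ℂ) * v * ((γ:ℂ) + (ω:ℂ) * Complex.I) / ((γ:ℂ)^2 + (ω:ℂ)^2 + 2 * u * v)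
    rw [eq_div_iff h2]
    linear_combination hc'
  · have h2 : ((γ:ℂ)^2 + (ω:ℂ)^2 + 2 * u * v) ≠ 0 := by convert hne2 using 1; ring
    rw [eq_sub_iff_add_eq, ← eq_sub_iff_add_eq', div_eq_iff h2]
    linear_combination -hs' + ((γ:ℂ)^2 + (ω:ℂ)^2 + 2 * (u * v)) * htr
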